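/- There exists a constant C such that for every k ∈ ℤ² \ {0}, ∑_{m+n=k, m≠0, n≠0} 1/(|m|² |n|²) ≤ C |k|^{-2} log(1 + |k|). -/

import Mathlib

open scoped ENNReal

noncomputable def latNorm (m : ℤ × ℤ) : ℝ :=
  Real.sqrt ((m.1 : ℝ)^2 + (m.2 : ℝ)^2)

namespace LatLog
open Finset Real

noncomputable def q (m : ℤ × ℤ) : ℝ := (m.1 : ℝ)^2 + (m.2 : ℝ)^2

lemma q_nonneg (m : ℤ × ℤ) : 0 ≤ q m := by
  show (0:ℝ) ≤ (m.1:ℝ)^2 + (m.2:ℝ)^2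
  positivity

lemma latNorm_sq (m : ℤ × ℤ) : latNorm m ^ 2 = q m :=
  Real.sq_sqrt (by show (0:ℝ) ≤ (m.1:ℝ)^2 + (m.2:ℝ)^2; positivity)

lemma one_le_sq {a : ℤ} (ha : a ≠ 0) : 1 ≤ (a : ℝ)^2 := by
  have : (1:ℝ) ≤ |(a:ℝ)| := by exact_mod_cast Int.one_le_abs ha
  nlinarith [this, abs_nonneg ((a:ℝ)), sq_abs ((a:ℝ))]

lemma one_le_q {m : ℤ × ℤ} (hm : m ≠ 0) : 1 ≤ q m := by
  have h : m.1 ≠ 0 ∨ m.2 ≠ 0 := by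
    by_contra h; push_neg at h; exact hm (Prod.ext h.1 h.2)
  rcases h with h | h
  · have := one_le_sq h; have : (0:ℝ) ≤ (m.2:ℝ)^2 := sq_nonneg _; unfold q; nlinarith [one_le_sq h]
  · unfold q; nlinarith [one_le_sq h, sq_nonneg ((m.1:ℝ))]

lemma one_le_latNorm {m : ℤ × ℤ} (hm : m ≠ 0) : 1 ≤ latNorm m := by
  rw [show latNorm m = Real.sqrt (q m) from rfl]
  rw [show (1:ℝ) = Real.sqrt 1 by simp]
  exact Real.sqrt_le_sqrt (one_le_q hm)

lemma latNorm_add_le (x y : ℤ × ℤ) : latNorm (x + y) ≤ latNorm x + latNorm y := by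
  have key : ∀ z : ℤ × ℤ, latNorm z = ‖(⟨(z.1 : ℝ), (z.2 : ℝ)⟩ : ℂ)‖ := by
    intro z
    rw [Complex.norm_def, Complex.normSq_mk, latNorm]
    ring_nf
  rw [key, key, key]
  have : (⟨((x+y).1 : ℝ), ((x+y).2 : ℝ)⟩ : ℂ) = ⟨(x.1:ℝ), (x.2:ℝ)⟩ + ⟨(y.1:ℝ), (y.2:ℝ)⟩ := by
    apply Complex.ext <;> simp [Prod.fst_add, Prod.snd_add] <;> push_cast <;> ring
  rw [this]
  exact norm_add_le _ _

lemma q_le_four_max {m n k : ℤ × ℤ} (h : m + n = k) : q k ≤ 4 * max (q m) (q n) := by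
  have h1 : latNorm k ≤ latNorm m + latNorm n := h ▸ latNorm_add_le m n
  have h2 : latNorm m ≤ max (latNorm m) (latNorm n) := le_max_left _ _
  have h3 : latNorm n ≤ max (latNorm m) (latNorm n) := le_max_right _ _
  have h0m : 0 ≤ latNorm m := Real.sqrt_nonneg _
  have h0n : 0 ≤ latNorm n := Real.sqrt_nonneg _
  have h0k : 0 ≤ latNorm k := Real.sqrt_nonneg _
  have hk : latNorm k ≤ 2 * max (latNorm m) (latNorm n) := by
    calc latNorm k ≤ latNorm m + latNorm n := h1
    _ ≤ _ := by rw [two_mul]; exact add_le_add h2 h3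
  have : q k = latNorm k ^ 2 := (latNorm_sq k).symm
  rw [this, ← latNorm_sq m, ← latNorm_sq n]
  rcases le_total (latNorm m) (latNorm n) with hc | hc
  · rw [max_eq_right hc] at hk
    rw [max_eq_right (by gcongr)]
    nlinarith
  · rw [max_eq_left hc] at hk
    rw [max_eq_left (by gcongr)]
    nlinarith

lemma half {k m n : ℤ × ℤ} (hm : m ≠ 0) (hn : n ≠ 0) (hmn : m + n = k) (hle : q m ≤ q n) :
    1 / (q m * q n) ≤ (if q m ≤ q k then 4 / (q k * q m) else 1 / (q m)^2) := by
  have hqm := one_le_q hm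
  have hqn := one_le_q hn
  have h4 : q k ≤ 4 * q n := by
    have := q_le_four_max hmn; rwa [max_eq_right hle] at this
  split_ifs with hc
  · have hqk : (1:ℝ) ≤ q k := le_trans hqm hc
    rw [div_le_div_iff₀ (by nlinarith) (by nlinarith)]
    nlinarith
  · rw [sq]
    apply one_div_le_one_div_of_le (by nlinarith)
    nlinarith

lemma pointwise {k m n : ℤ × ℤ} (hm : m ≠ 0) (hn : n ≠ 0) (hmn : m + n = k) :
    1 / (q m * q n) ≤ (if q m ≤ q k then 4 / (q k * q m) else 1 / (q m)^2)
      + (if q n ≤ q k then 4 / (q k * q n) else 1 / (q n)^2) := by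
  have hqm := one_le_q hm
  have hqn := one_le_q hn
  have hqk0 : 0 ≤ q k := q_nonneg k
  have hA : (0:ℝ) ≤ (if q m ≤ q k then 4 / (q k * q m) else 1 / (q m)^2) := by
    split_ifs <;> positivity
  have hB : (0:ℝ) ≤ (if q n ≤ q k then 4 / (q k * q n) else 1 / (q n)^2) := by
    split_ifs <;> positivity
  rcases le_total (q m) (q n) with hc | hc
  · have := half hm hn hmn hc; linarith
  · have := half (k := k) hn hm (show n + m = k by rw [add_comm]; exact hmn) hc
    rw [mul_comm] at this; linarith


/-- partial sums control an `ofReal` tsum over ℕ -/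
lemma tsum_ofReal_le {t : ℕ → ℝ} (ht : ∀ j, 0 ≤ t j) {c : ℝ}
    (h : ∀ n, ∑ j ∈ Finset.range n, t j ≤ c) :
    ∑' j : ℕ, ENNReal.ofReal (t j) ≤ ENNReal.ofReal c := by
  rw [ENNReal.tsum_eq_iSup_nat]
  refine iSup_le fun n => ?_
  rw [← ENNReal.ofReal_sum_of_nonneg (fun j _ => ht j)]
  exact ENNReal.ofReal_le_ofReal (h n)

lemma tsum_int_natAbs_le {t : ℕ → ℝ} (ht : ∀ j, 0 ≤ t j) (ht0 : t 0 = 0) {c : ℝ}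
    (h : ∀ n, ∑ j ∈ Finset.range n, t j ≤ c) :
    ∑' a : ℤ, ENNReal.ofReal (t a.natAbs) ≤ ENNReal.ofReal (2 * c) := by
  have hc : 0 ≤ c := by simpa using h 0
  rw [tsum_of_nat_of_neg_add_one ENNReal.summable ENNReal.summable]
  have h1 : ∑' n : ℕ, ENNReal.ofReal (t ((n : ℤ).natAbs)) ≤ ENNReal.ofReal c := by
    simpa using tsum_ofReal_le ht h
  have h2 : ∑' n : ℕ, ENNReal.ofReal (t ((-((n:ℤ) + 1)).natAbs)) ≤ ENNReal.ofReal c := by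
    have heq : ∀ n : ℕ, ((-((n:ℤ) + 1)).natAbs) = n + 1 := by intro n; omega
    simp_rw [heq]
    refine tsum_ofReal_le (fun j => ht _) (fun n => ?_)
    have := h (n + 1)
    rwa [Finset.sum_range_succ', ht0, add_zero] at this
  calc _ ≤ ENNReal.ofReal c + ENNReal.ofReal c := add_le_add h1 h2
  _ = ENNReal.ofReal (2 * c) := by rw [← ENNReal.ofReal_add hc hc]; ring_nf

/-- tail sum of `1/j²` -/
lemma sum_sq_tail {A : ℕ} (hA : 1 ≤ A) (n : ℕ) :
    ∑ j ∈ Finset.range n, (if A < j then 1/(j:ℝ)^2 else 0) ≤ 1/(A:ℝ) := by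
  have key : ∀ m : ℕ, ∑ j ∈ Finset.range m, (if A < j then 1/(j:ℝ)^2 else 0)
      ≤ 1/(A:ℝ) - 1/((max m (A+1) : ℕ) - 1 : ℝ) := by
    intro m
    induction m with
    | zero => simp
    | succ m ih =>
      rw [Finset.sum_range_succ]
      rcases le_or_gt m A with hc | hc
      · rw [if_neg (by omega)]
        have : max m (A+1) = A + 1 := by omega
        have h2 : max (m+1) (A+1) = A + 1 := by omega
        rw [this] at ih; rw [h2]
        simpa using ih
      · rw [if_pos hc]
        have hmax1 : max m (A+1) = m := by omega
        have hmax2 : max (m+1) (A+1) = m + 1 := by omega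
        rw [hmax1] at ih; rw [hmax2]
        have hm2 : 2 ≤ m := by omega
        have hx : (2:ℝ) ≤ (m:ℝ) := by exact_mod_cast hm2
        have step : 1/(m:ℝ)^2 ≤ 1/((m:ℝ) - 1) - 1/(m:ℝ) := by
          rw [div_sub_div _ _ (by linarith) (by linarith)]
          rw [div_le_div_iff₀ (by positivity) (by nlinarith)]
          ring_nf
          nlinarith
        push_cast
        push_cast at ih
        rw [add_sub_cancel_right]
        linarith
  calc _ ≤ 1/(A:ℝ) - 1/((max n (A+1) : ℕ) - 1 : ℝ) := key n
  _ ≤ 1/(A:ℝ) := by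
    have h1 : A + 1 ≤ max n (A+1) := le_max_right _ _
    have : (1:ℝ) ≤ ((max n (A+1) : ℕ) : ℝ) - 1 := by
      have : (2:ℝ) ≤ ((max n (A+1) : ℕ) : ℝ) := by exact_mod_cast (by omega : 2 ≤ max n (A+1))
      linarith
    have : 0 < ((max n (A+1) : ℕ) : ℝ) - 1 := by linarith
    have : 0 ≤ 1/(((max n (A+1) : ℕ) : ℝ) - 1) := by positivity
    linarith

lemma sum_sq_all (n : ℕ) :
    ∑ j ∈ Finset.range n, (if j = 0 then 0 else 1/(j:ℝ)^2) ≤ 2 := by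
  have hpt : ∀ j : ℕ, (if j = 0 then (0:ℝ) else 1/(j:ℝ)^2)
      ≤ (if j = 1 then (1:ℝ) else 0) + (if 1 < j then 1/(j:ℝ)^2 else 0) := by
    intro j
    rcases Nat.lt_or_ge j 2 with hj | hj
    · interval_cases j <;> norm_num
    · rw [if_neg (by omega), if_neg (by omega), if_pos (by omega)]
      simp
  calc _ ≤ ∑ j ∈ Finset.range n, ((if j = 1 then (1:ℝ) else 0) + (if 1 < j then 1/(j:ℝ)^2 else 0)) :=
        Finset.sum_le_sum (fun j _ => hpt j)
  _ = (∑ j ∈ Finset.range n, (if j = 1 then (1:ℝ) else 0))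
      + ∑ j ∈ Finset.range n, (if 1 < j then 1/(j:ℝ)^2 else 0) := Finset.sum_add_distrib
  _ ≤ 1 + 1/((1:ℕ):ℝ) := by
    gcongr ?_ + ?_
    · rw [Finset.sum_ite_eq' (Finset.range n) 1 (fun _ => (1:ℝ))]
      split_ifs <;> norm_num
    · exact sum_sq_tail le_rfl n
  _ ≤ 2 := by norm_num

lemma sum_harmonic {N : ℕ} (hN : 1 ≤ N) (n : ℕ) :
    ∑ j ∈ Finset.range n, (if j ≠ 0 ∧ j ≤ N then 1/(j:ℝ) else 0) ≤ 1 + Real.log N := by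
  have step1 : ∑ j ∈ Finset.range n, (if j ≠ 0 ∧ j ≤ N then 1/(j:ℝ) else 0)
      ≤ ∑ j ∈ Finset.Icc 1 N, 1/(j:ℝ) := by
    have : ∀ j : ℕ, (if j ≠ 0 ∧ j ≤ N then 1/(j:ℝ) else 0) = if j ∈ Finset.Icc 1 N then 1/(j:ℝ) else 0 := by
      intro j; congr 1; simp [Finset.mem_Icc]; omega
    simp_rw [this]
    rw [Finset.sum_ite_mem]
    apply Finset.sum_le_sum_of_subset_of_nonneg (Finset.inter_subset_right)
    intro j _ _; positivity
  have step2 : ∑ j ∈ Finset.Icc 1 N, 1/(j:ℝ) = (harmonic N : ℝ) := by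
    rw [harmonic_eq_sum_Icc]
    push_cast
    simp [one_div]
  calc _ ≤ ∑ j ∈ Finset.Icc 1 N, 1/(j:ℝ) := step1
  _ = (harmonic N : ℝ) := step2
  _ ≤ 1 + Real.log N := harmonic_le_one_add_log N


lemma cast_natAbs_sq (b : ℤ) : ((b.natAbs : ℝ))^2 = (b:ℝ)^2 := by
  simp only [Nat.cast_natAbs, sq_abs]
  rw [← Int.cast_pow, ← Int.cast_pow, sq_abs]

lemma lemZ2 : ∑' b : ℤ, ENNReal.ofReal (1/((b:ℝ))^2) ≤ ENNReal.ofReal 4 := by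
  have key : ∀ b : ℤ, ENNReal.ofReal (1/((b:ℝ))^2)
      = ENNReal.ofReal (if b.natAbs = 0 then 0 else 1/((b.natAbs : ℕ):ℝ)^2) := by
    intro b
    rcases eq_or_ne b 0 with rfl | hb
    · simp
    · have h2 : ((b.natAbs : ℕ):ℝ)^2 = (b:ℝ)^2 := cast_natAbs_sq b
      rw [if_neg (by omega : ¬ b.natAbs = 0), h2]
  simp_rw [key]
  have := tsum_int_natAbs_le (t := fun j => if j = 0 then 0 else 1/(j:ℝ)^2)
    (fun j => by split_ifs <;> positivity) (by simp) (c := 2) sum_sq_all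
  calc _ ≤ ENNReal.ofReal (2 * 2) := this
  _ = ENNReal.ofReal 4 := by norm_num

lemma lemRow {a : ℤ} (ha : a ≠ 0) :
    ∑' b : ℤ, ENNReal.ofReal (1/((a:ℝ)^2 + (b:ℝ)^2)) ≤ ENNReal.ofReal (5/((a.natAbs : ℕ):ℝ)) := by
  set A := a.natAbs with hAdef
  have hA : 1 ≤ A := by omega
  have hA1 : (1:ℝ) ≤ (A:ℝ) := by exact_mod_cast hA
  have haA : (a:ℝ)^2 = ((A:ℕ):ℝ)^2 := (cast_natAbs_sq a).symm
  have ha1 : (1:ℝ) ≤ (a:ℝ)^2 := LatLog.one_le_sq ha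
  set u : ℤ → ℝ≥0∞ := fun b => if b.natAbs ≤ A then ENNReal.ofReal (1/(a:ℝ)^2) else 0 with hu
  set t : ℕ → ℝ := fun j => if A < j then 1/(j:ℝ)^2 else 0 with htdef
  set v : ℤ → ℝ≥0∞ := fun b => ENNReal.ofReal (t b.natAbs) with hv
  have hpt : ∀ b : ℤ, ENNReal.ofReal (1/((a:ℝ)^2 + (b:ℝ)^2)) ≤ u b + v b := by
    intro b
    rcases le_or_gt b.natAbs A with hc | hc
    · refine le_trans ?_ (le_add_right le_rfl)
      rw [hu]; simp only [if_pos hc]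
      apply ENNReal.ofReal_le_ofReal
      apply one_div_le_one_div_of_le (by positivity)
      nlinarith [sq_nonneg ((b:ℝ))]
    · refine le_trans ?_ (le_add_left le_rfl)
      rw [hv, htdef]; simp only [if_pos hc]
      apply ENNReal.ofReal_le_ofReal
      rw [cast_natAbs_sq]
      have hb1 : (1:ℝ) ≤ (b:ℝ)^2 := LatLog.one_le_sq (by omega)
      apply one_div_le_one_div_of_le (by positivity)
      nlinarith
  have hu_sum : ∑' b : ℤ, u b ≤ ENNReal.ofReal (3/((A:ℕ):ℝ)) := by
    have hvanish : ∀ b ∉ Finset.Icc (-(A:ℤ)) (A:ℤ), u b = 0 := by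
      intro b hb
      rw [hu]; simp only
      rw [if_neg]
      intro hc
      exact hb (by simp [Finset.mem_Icc]; omega)
    rw [tsum_eq_sum hvanish]
    have : ∀ b ∈ Finset.Icc (-(A:ℤ)) (A:ℤ), u b = ENNReal.ofReal (1/(a:ℝ)^2) := by
      intro b hb
      simp only [Finset.mem_Icc] at hb
      rw [hu]; simp only [if_pos (by omega : b.natAbs ≤ A)]
    rw [Finset.sum_congr rfl this, Finset.sum_const]
    have hcard : (Finset.Icc (-(A:ℤ)) (A:ℤ)).card = 2*A + 1 := by
      rw [Int.card_Icc]; omega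
    rw [hcard, nsmul_eq_mul]
    rw [show ((2*A+1 : ℕ) : ℝ≥0∞) = ENNReal.ofReal ((2*A+1 : ℕ):ℝ) by
      rw [ENNReal.ofReal_natCast]]
    rw [← ENNReal.ofReal_mul (by positivity)]
    apply ENNReal.ofReal_le_ofReal
    rw [haA, mul_one_div, div_le_div_iff₀ (by positivity) (by positivity)]
    push_cast
    nlinarith
  have hv_sum : ∑' b : ℤ, v b ≤ ENNReal.ofReal (2 * (1/((A:ℕ):ℝ))) := by
    rw [hv]
    exact tsum_int_natAbs_le (fun j => by rw [htdef]; dsimp only; split_ifs <;> positivity)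
      (by rw [htdef]; simp) (sum_sq_tail hA)
  calc ∑' b : ℤ, ENNReal.ofReal (1/((a:ℝ)^2 + (b:ℝ)^2)) ≤ ∑' b : ℤ, (u b + v b) :=
        ENNReal.tsum_le_tsum hpt
  _ = ∑' b, u b + ∑' b, v b := ENNReal.tsum_add
  _ ≤ ENNReal.ofReal (3/((A:ℕ):ℝ)) + ENNReal.ofReal (2 * (1/((A:ℕ):ℝ))) := add_le_add hu_sum hv_sum
  _ = ENNReal.ofReal (5/((A:ℕ):ℝ)) := by
    rw [← ENNReal.ofReal_add (by positivity) (by positivity)]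
    ring_nf


lemma lemBox {N : ℕ} (hN : 1 ≤ N) :
    ∑' x : ℤ × ℤ, (if x ≠ 0 ∧ x.1.natAbs ≤ N ∧ x.2.natAbs ≤ N
        then ENNReal.ofReal (1/q x) else 0)
      ≤ ENNReal.ofReal (14 + 10 * Real.log N) := by
  set f : ℤ × ℤ → ℝ≥0∞ := fun x => if x ≠ 0 ∧ x.1.natAbs ≤ N ∧ x.2.natAbs ≤ N
      then ENNReal.ofReal (1/q x) else 0 with hf
  have hprod : ∑' x : ℤ × ℤ, f x = ∑' (a : ℤ) (b : ℤ), f (a, b) := ENNReal.tsum_prod'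
  rw [hprod]
  set Col : ℤ → ℝ≥0∞ := fun a => ∑' b : ℤ, f (a, b) with hCol
  have hcol0 : Col 0 ≤ ENNReal.ofReal 4 := by
    refine le_trans (ENNReal.tsum_le_tsum (fun b => ?_)) lemZ2
    rw [hf]
    dsimp only
    split_ifs with hc
    · apply ENNReal.ofReal_le_ofReal
      have : q ((0:ℤ), b) = (b:ℝ)^2 := by
        show ((0:ℤ):ℝ)^2 + (b:ℝ)^2 = (b:ℝ)^2
        norm_num
      rw [this]
    · exact zero_le
  set t : ℕ → ℝ := fun j => if j ≠ 0 ∧ j ≤ N then 5/(j:ℝ) else 0 with htdef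
  have hcola : ∀ a : ℤ, (if a = 0 then 0 else Col a) ≤ ENNReal.ofReal (t a.natAbs) := by
    intro a
    rcases eq_or_ne a 0 with rfl | ha
    · simp only [if_pos rfl]
      exact zero_le
    rw [if_neg ha]
    rcases le_or_gt a.natAbs N with hle | hgt
    · have h1 : Col a ≤ ∑' b : ℤ, ENNReal.ofReal (1/((a:ℝ)^2 + (b:ℝ)^2)) := by
        refine ENNReal.tsum_le_tsum (fun b => ?_)
        rw [hf]; dsimp only
        split_ifs with hc
        · exact le_rfl
        · exact zero_le
      refine le_trans (h1.trans (lemRow ha)) ?_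
      rw [htdef]; dsimp only
      rw [if_pos ⟨by omega, hle⟩]
    · have h0 : Col a = 0 := by
        rw [hCol]; dsimp only
        rw [ENNReal.tsum_eq_zero]
        intro b
        rw [hf]; dsimp only
        rw [if_neg]
        push_neg
        intro _ h
        omega
      rw [h0]
      exact zero_le
  have hsum_t : ∀ n : ℕ, ∑ j ∈ Finset.range n, t j ≤ 5 * (1 + Real.log N) := by
    intro n
    have : ∀ j : ℕ, t j = 5 * (if j ≠ 0 ∧ j ≤ N then 1/(j:ℝ) else 0) := by
      intro j; rw [htdef]; dsimp only; split_ifs <;> ring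
    simp_rw [this, ← Finset.mul_sum]
    have := sum_harmonic hN n
    nlinarith [Real.log_natCast_nonneg N]
  calc ∑' a : ℤ, Col a = Col 0 + ∑' a : ℤ, (if a = 0 then 0 else Col a) := by
        rw [ENNReal.tsum_eq_add_tsum_ite 0]
        congr 1
        exact tsum_congr fun a => by split_ifs <;> rfl
  _ ≤ ENNReal.ofReal 4 + ∑' a : ℤ, ENNReal.ofReal (t a.natAbs) :=
        add_le_add hcol0 (ENNReal.tsum_le_tsum hcola)
  _ ≤ ENNReal.ofReal 4 + ENNReal.ofReal (2 * (5 * (1 + Real.log N))) := by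
        gcongr
        exact tsum_int_natAbs_le
          (fun j => by rw [htdef]; dsimp only; split_ifs <;> positivity)
          (by rw [htdef]; simp) hsum_t
  _ ≤ ENNReal.ofReal (14 + 10 * Real.log N) := by
        rw [← ENNReal.ofReal_add (by norm_num)
          (by nlinarith [Real.log_natCast_nonneg N])]
        apply ENNReal.ofReal_le_ofReal
        nlinarith [Real.log_natCast_nonneg N]


lemma sum_cube_tail {K : ℝ} (hK : 1 ≤ K) (n : ℕ) :
    ∑ j ∈ Finset.range n, (if K < 2*(j:ℝ)^2 then 5/(j:ℝ)^3 else 0) ≤ 40/K := by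
  set s := Real.sqrt (K/2) with hs
  set A := ⌊s⌋₊ with hA
  have hs0 : 0 ≤ s := Real.sqrt_nonneg _
  have hsqK : Real.sqrt K > 0 := Real.sqrt_pos.mpr (by linarith)
  have hKpos : (0:ℝ) < K := by linarith
  set c := 5 * Real.sqrt 2 / Real.sqrt K with hc
  have hc0 : 0 ≤ c := by positivity
  have hseq : s * Real.sqrt 2 = Real.sqrt K := by
    rw [hs, ← Real.sqrt_mul (by linarith : (0:ℝ) ≤ K/2)]
    norm_num
  have hsqrt2 : (0:ℝ) < Real.sqrt 2 := by positivity
  have hpt : ∀ j : ℕ, (if K < 2*(j:ℝ)^2 then 5/(j:ℝ)^3 else 0)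
      ≤ c * (if A < j then 1/(j:ℝ)^2 else 0) := by
    intro j
    by_cases h1 : K < 2*(j:ℝ)^2
    · rw [if_pos h1]
      have hj2 : s^2 < (j:ℝ)^2 := by
        rw [hs, Real.sq_sqrt (by linarith : (0:ℝ) ≤ K/2)]
        linarith
      have hjs : s < (j:ℝ) := by nlinarith [Nat.cast_nonneg (α := ℝ) j]
      have hj0 : (0:ℝ) < j := lt_of_le_of_lt hs0 hjs
      have hAj : A < j := by
        have h1' : (A:ℝ) ≤ s := Nat.floor_le hs0
        exact_mod_cast lt_of_le_of_lt h1' hjs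
      rw [if_pos hAj]
      have hinv : 1/(j:ℝ) ≤ Real.sqrt 2 / Real.sqrt K := by
        rw [div_le_div_iff₀ hj0 hsqK, ← hseq]
        nlinarith
      calc 5/(j:ℝ)^3 = (5 * (1/(j:ℝ))) * (1/(j:ℝ)^2) := by ring
      _ ≤ (5 * (Real.sqrt 2 / Real.sqrt K)) * (1/(j:ℝ)^2) := by
            apply mul_le_mul_of_nonneg_right _ (by positivity)
            apply mul_le_mul_of_nonneg_left hinv (by norm_num)
      _ = c * (1/(j:ℝ)^2) := by rw [hc]; ring
    · rw [if_neg h1]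
      have : (0:ℝ) ≤ c * (if A < j then 1/(j:ℝ)^2 else 0) := by
        apply mul_nonneg hc0
        split_ifs <;> positivity
      linarith
  have hsum2 : ∑ j ∈ Finset.range n, (if A < j then 1/(j:ℝ)^2 else 0) ≤ 2 * Real.sqrt 2 / Real.sqrt K := by
    rcases Nat.eq_zero_or_pos A with hA0 | hApos
    · -- K < 2, use full sum bound 2
      have hs1 : s < 1 := by
        by_contra hcon
        push_neg at hcon
        have : 1 ≤ A := Nat.le_floor (by exact_mod_cast hcon)
        omega
      have hK2 : K < 2 := by
        have : s^2 < 1 := by nlinarith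
        rw [hs, Real.sq_sqrt (by linarith : (0:ℝ) ≤ K/2)] at this
        linarith
      have hb : ∑ j ∈ Finset.range n, (if A < j then 1/(j:ℝ)^2 else 0) ≤ 2 := by
        refine le_trans (Finset.sum_le_sum (fun j _ => ?_)) (sum_sq_all n)
        rcases Nat.eq_zero_or_pos j with rfl | hj
        · simp
        · have e1 : (if A < j then 1/(j:ℝ)^2 else 0) ≤ 1/(j:ℝ)^2 := by
            split_ifs
            · exact le_rfl
            · positivity
          have e2 : (if j = 0 then (0:ℝ) else 1/(j:ℝ)^2) = 1/(j:ℝ)^2 := by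
            rw [if_neg (by omega : ¬ j = 0)]
          rw [e2]
          exact e1
      have : Real.sqrt K < Real.sqrt 2 := Real.sqrt_lt_sqrt (by linarith) hK2
      calc ∑ j ∈ Finset.range n, (if A < j then 1/(j:ℝ)^2 else 0) ≤ 2 := hb
      _ = 2 * Real.sqrt K / Real.sqrt K := by field_simp
      _ ≤ 2 * Real.sqrt 2 / Real.sqrt K := by gcongr <;> linarith
    · have hb := sum_sq_tail hApos n
      have hA2 : s < 2 * (A:ℕ) := by
        have h1' : s - 1 < (A:ℝ) := Nat.sub_one_lt_floor s
        have h2' : (1:ℝ) ≤ (A:ℝ) := by exact_mod_cast hApos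
        linarith
      have hApos' : (0:ℝ) < (A:ℝ) := by exact_mod_cast hApos
      have hinv : 1/((A:ℕ):ℝ) ≤ 2/s ∨ True := Or.inr trivial
      -- 1/A ≤ 2/s needs s > 0; but if s = 0 then K/2=0 contra K ≥ 1
      have hspos : 0 < s := Real.sqrt_pos.mpr (by linarith)
      have h1A : 1/((A:ℕ):ℝ) ≤ 2/s := by
        rw [div_le_div_iff₀ hApos' hspos]
        linarith
      have h2s : 2/s = 2 * Real.sqrt 2 / Real.sqrt K := by
        rw [← hseq]
        rw [div_eq_div_iff hspos.ne' (by positivity : (0:ℝ) < s * Real.sqrt 2).ne']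
        ring
      calc _ ≤ 1/((A:ℕ):ℝ) := hb
      _ ≤ 2/s := h1A
      _ = 2 * Real.sqrt 2 / Real.sqrt K := h2s
  calc ∑ j ∈ Finset.range n, (if K < 2*(j:ℝ)^2 then 5/(j:ℝ)^3 else 0)
      ≤ ∑ j ∈ Finset.range n, c * (if A < j then 1/(j:ℝ)^2 else 0) :=
        Finset.sum_le_sum (fun j _ => hpt j)
  _ = c * ∑ j ∈ Finset.range n, (if A < j then 1/(j:ℝ)^2 else 0) := by rw [Finset.mul_sum]
  _ ≤ c * (2 * Real.sqrt 2 / Real.sqrt K) := by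
        apply mul_le_mul_of_nonneg_left hsum2 hc0
  _ = 10 * (Real.sqrt 2 * Real.sqrt 2) / (Real.sqrt K * Real.sqrt K) := by rw [hc]; ring
  _ = 20 / K := by
        rw [Real.mul_self_sqrt (by norm_num : (0:ℝ) ≤ 2), Real.mul_self_sqrt (by linarith)]
        norm_num
  _ ≤ 40/K := by
        rw [div_le_div_iff₀ hKpos hKpos]
        nlinarith


lemma q_pair (a b : ℤ) : q (a, b) = (a:ℝ)^2 + (b:ℝ)^2 := rfl

lemma lemTail {k : ℤ × ℤ} (hk : k ≠ 0) :
    ∑' x : ℤ × ℤ, (if q k < q x then ENNReal.ofReal (1/(q x)^2) else 0)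
      ≤ ENNReal.ofReal (160 / q k) := by
  have hQ1 : (1:ℝ) ≤ q k := one_le_q hk
  set W : ℤ × ℤ → ℝ≥0∞ :=
    fun x => if q k < 2*((x.1:ℝ))^2 then ENNReal.ofReal (1/(q x)^2) else 0 with hW
  set W' : ℤ × ℤ → ℝ≥0∞ :=
    fun x => if q k < 2*((x.2:ℝ))^2 then ENNReal.ofReal (1/(q x)^2) else 0 with hW'
  have hpt : ∀ x, (if q k < q x then ENNReal.ofReal (1/(q x)^2) else 0) ≤ W x + W' x := by
    intro x
    by_cases hc : q k < q x
    · rw [if_pos hc]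
      have hqx : q x = (x.1:ℝ)^2 + (x.2:ℝ)^2 := rfl
      have hor : q k < 2*((x.1:ℝ))^2 ∨ q k < 2*((x.2:ℝ))^2 := by
        by_contra hcon
        push_neg at hcon
        nlinarith [hcon.1, hcon.2]
      rcases hor with h | h
      · refine le_trans ?_ (le_add_right le_rfl)
        rw [hW]; dsimp only; rw [if_pos h]
      · refine le_trans ?_ (le_add_left le_rfl)
        rw [hW']; dsimp only; rw [if_pos h]
    · rw [if_neg hc]; exact zero_le
  have hswap : ∑' x : ℤ × ℤ, W x = ∑' x : ℤ × ℤ, W' x := by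
    rw [← (Equiv.prodComm ℤ ℤ).tsum_eq W']
    apply tsum_congr
    intro x
    rw [hW, hW']
    dsimp only [Equiv.prodComm_apply]
    have hq : q (Prod.swap x) = q x := by
      show (x.2:ℝ)^2 + (x.1:ℝ)^2 = (x.1:ℝ)^2 + (x.2:ℝ)^2
      ring
    rw [hq, Prod.snd_swap]
  set t : ℕ → ℝ := fun j => if q k < 2*(j:ℝ)^2 then 5/(j:ℝ)^3 else 0 with htdef
  have ht_nonneg : ∀ j, 0 ≤ t j := by
    intro j; rw [htdef]; dsimp only; split_ifs <;> positivity
  have ht0 : t 0 = 0 := by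
    rw [htdef]; dsimp only; rw [if_neg (by norm_num; linarith)]
  have hcol : ∀ a : ℤ, (∑' b : ℤ, W (a, b)) ≤ ENNReal.ofReal (t a.natAbs) := by
    intro a
    have hcast : ((a.natAbs:ℕ):ℝ)^2 = (a:ℝ)^2 := cast_natAbs_sq a
    by_cases hc : q k < 2*((a:ℝ))^2
    · have ha : a ≠ 0 := by
        rintro rfl
        norm_num at hc
        linarith
      have ha2 : (1:ℝ) ≤ (a:ℝ)^2 := one_le_sq ha
      set A := a.natAbs with hAdef
      have hA1 : 1 ≤ A := by omega
      have hstep : ∀ b : ℤ, W (a, b)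
          ≤ ENNReal.ofReal (1/(a:ℝ)^2) * ENNReal.ofReal (1/((a:ℝ)^2 + (b:ℝ)^2)) := by
        intro b
        rw [hW]; dsimp only; rw [if_pos hc]
        rw [← ENNReal.ofReal_mul (by positivity)]
        apply ENNReal.ofReal_le_ofReal
        rw [q_pair]
        have hb2 : (0:ℝ) ≤ (b:ℝ)^2 := sq_nonneg _
        have hpos : (0:ℝ) < (a:ℝ)^2 + (b:ℝ)^2 := by nlinarith
        rw [div_mul_div_comm, one_mul]
        apply one_div_le_one_div_of_le (by positivity)
        nlinarith
      calc (∑' b : ℤ, W (a, b))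
          ≤ ∑' b : ℤ, ENNReal.ofReal (1/(a:ℝ)^2) * ENNReal.ofReal (1/((a:ℝ)^2 + (b:ℝ)^2)) :=
            ENNReal.tsum_le_tsum hstep
      _ = ENNReal.ofReal (1/(a:ℝ)^2) * ∑' b : ℤ, ENNReal.ofReal (1/((a:ℝ)^2 + (b:ℝ)^2)) :=
            ENNReal.tsum_mul_left
      _ ≤ ENNReal.ofReal (1/(a:ℝ)^2) * ENNReal.ofReal (5/((A:ℕ):ℝ)) := by
            gcongr
            exact lemRow ha
      _ = ENNReal.ofReal (t A) := by
            rw [← ENNReal.ofReal_mul (by positivity), htdef]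
            dsimp only
            rw [if_pos (by rw [hcast]; exact hc)]
            rw [← hcast]
            congr 1
            have hApos : (0:ℝ) < ((A:ℕ):ℝ) := by
              have : (1:ℝ) ≤ ((A:ℕ):ℝ) := by exact_mod_cast hA1
              linarith
            field_simp
    · have hz : ∀ b : ℤ, W (a, b) = 0 := by
        intro b; rw [hW]; dsimp only; rw [if_neg hc]
      rw [tsum_congr hz, tsum_zero]
      exact zero_le
  have hWsum : ∑' x : ℤ × ℤ, W x ≤ ENNReal.ofReal (80 / q k) := by
    rw [ENNReal.tsum_prod']
    calc ∑' (a : ℤ) (b : ℤ), W (a, b) ≤ ∑' a : ℤ, ENNReal.ofReal (t a.natAbs) :=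
          ENNReal.tsum_le_tsum hcol
    _ ≤ ENNReal.ofReal (2 * (40 / q k)) :=
          tsum_int_natAbs_le ht_nonneg ht0 (sum_cube_tail hQ1)
    _ = ENNReal.ofReal (80 / q k) := by rw [show (2:ℝ) * (40 / q k) = 80 / q k by ring]
  calc ∑' x : ℤ × ℤ, (if q k < q x then ENNReal.ofReal (1/(q x)^2) else 0)
      ≤ ∑' x : ℤ × ℤ, (W x + W' x) := ENNReal.tsum_le_tsum hpt
  _ = ∑' x : ℤ × ℤ, W x + ∑' x : ℤ × ℤ, W' x := ENNReal.tsum_add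
  _ = ∑' x : ℤ × ℤ, W x + ∑' x : ℤ × ℤ, W x := by rw [hswap]
  _ ≤ ENNReal.ofReal (80 / q k) + ENNReal.ofReal (80 / q k) := add_le_add hWsum hWsum
  _ = ENNReal.ofReal (160 / q k) := by
        rw [← ENNReal.ofReal_add (by positivity) (by positivity)]
        rw [show (80:ℝ) / q k + 80 / q k = 160 / q k by ring]


lemma natAbs_le_floor {z : ℤ} {r : ℝ} (h : (z:ℝ)^2 ≤ r^2) (hr : 0 ≤ r) :
    z.natAbs ≤ ⌊r⌋₊ := by
  apply Nat.le_floor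
  have h2 : |(z:ℝ)| ≤ r := by
    have := Real.sqrt_le_sqrt h
    rwa [Real.sqrt_sq_eq_abs, Real.sqrt_sq hr] at this
  calc ((z.natAbs : ℕ):ℝ) = |(z:ℝ)| := by simp only [Nat.cast_natAbs]; push_cast; ring
  _ ≤ r := h2

lemma lemNear {k : ℤ × ℤ} (hk : k ≠ 0) :
    ∑' x : ℤ × ℤ, (if x ≠ 0 ∧ q x ≤ q k then ENNReal.ofReal (1/q x) else 0)
      ≤ ENNReal.ofReal (14 + 10 * Real.log (1 + latNorm k)) := by
  set N := ⌊latNorm k⌋₊ with hN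
  have hL1 : (1:ℝ) ≤ latNorm k := one_le_latNorm hk
  have hL0 : (0:ℝ) ≤ latNorm k := by linarith
  have hN1 : 1 ≤ N := Nat.le_floor (by exact_mod_cast hL1)
  have hpt : ∀ x : ℤ × ℤ, (if x ≠ 0 ∧ q x ≤ q k then ENNReal.ofReal (1/q x) else 0)
      ≤ (if x ≠ 0 ∧ x.1.natAbs ≤ N ∧ x.2.natAbs ≤ N then ENNReal.ofReal (1/q x) else 0) := by
    intro x
    by_cases hc : x ≠ 0 ∧ q x ≤ q k
    · rw [if_pos hc]
      have hqx : q x = (x.1:ℝ)^2 + (x.2:ℝ)^2 := rfl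
      have hqk : q k = latNorm k^2 := (latNorm_sq k).symm
      have h1 : (x.1:ℝ)^2 ≤ (latNorm k)^2 := by nlinarith [hc.2, sq_nonneg ((x.2:ℝ))]
      have h2 : (x.2:ℝ)^2 ≤ (latNorm k)^2 := by nlinarith [hc.2, sq_nonneg ((x.1:ℝ))]
      rw [if_pos ⟨hc.1, natAbs_le_floor h1 hL0, natAbs_le_floor h2 hL0⟩]
    · rw [if_neg hc]
      exact zero_le
  refine le_trans (ENNReal.tsum_le_tsum hpt) (le_trans (lemBox hN1) ?_)
  apply ENNReal.ofReal_le_ofReal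
  have hNpos : (0:ℝ) < (N:ℝ) := by exact_mod_cast hN1
  have hNle : (N:ℝ) ≤ 1 + latNorm k := by
    have := Nat.floor_le hL0
    rw [← hN] at this
    linarith
  have hlog : Real.log N ≤ Real.log (1 + latNorm k) := Real.log_le_log hNpos hNle
  linarith

end LatLog

theorem lattice_log_sum_estimate :
    ∃ C : ℝ, 0 < C ∧ ∀ k : ℤ × ℤ, k ≠ 0 →
      (∑' p : {p : (ℤ × ℤ) × (ℤ × ℤ) // p.1 ≠ 0 ∧ p.2 ≠ 0 ∧ p.1 + p.2 = k},
        ENNReal.ofReal (1 / (latNorm p.1.1 ^ 2 * latNorm p.1.2 ^ 2)))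
        ≤ ENNReal.ofReal (C * latNorm k ^ (-2 : ℝ) * Real.log (1 + latNorm k)) := by
  classical
  refine ⟨1000, by norm_num, fun k hk => ?_⟩
  open LatLog in
  have hQ1 : (1:ℝ) ≤ q k := LatLog.one_le_q hk
  have hQ0 : (0:ℝ) < q k := by linarith
  have hL1 : (1:ℝ) ≤ latNorm k := LatLog.one_le_latNorm hk
  set L := Real.log (1 + latNorm k) with hLdef
  have hlog2 : Real.log 2 ≤ L := by
    rw [hLdef]
    apply Real.log_le_log (by norm_num)
    linarith
  have hlog2' : (0.6931471803:ℝ) < Real.log 2 := Real.log_two_gt_d9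
  have hLpos : (0:ℝ) < L := by linarith
  set F : ℤ × ℤ → ℝ≥0∞ :=
    fun x => ENNReal.ofReal (1 / (LatLog.q x * LatLog.q (k - x))) with hF
  -- reindex the subtype sum by the first coordinate
  have hsub : (∑' p : {p : (ℤ × ℤ) × (ℤ × ℤ) // p.1 ≠ 0 ∧ p.2 ≠ 0 ∧ p.1 + p.2 = k},
        ENNReal.ofReal (1 / (latNorm p.1.1 ^ 2 * latNorm p.1.2 ^ 2)))
      ≤ ∑' x : ℤ × ℤ, F x := by
    have hcongr : ∀ p : {p : (ℤ × ℤ) × (ℤ × ℤ) // p.1 ≠ 0 ∧ p.2 ≠ 0 ∧ p.1 + p.2 = k},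
        ENNReal.ofReal (1 / (latNorm p.1.1 ^ 2 * latNorm p.1.2 ^ 2)) = F (p.1.1) := by
      intro p
      have h2 : (p : (ℤ × ℤ) × (ℤ × ℤ)).2 = k - (p : (ℤ × ℤ) × (ℤ × ℤ)).1 :=
        eq_sub_of_add_eq' p.2.2.2
      rw [hF]
      dsimp only
      rw [LatLog.latNorm_sq, LatLog.latNorm_sq, h2]
    rw [tsum_congr hcongr]
    have hinj : Function.Injective
        (fun p : {p : (ℤ × ℤ) × (ℤ × ℤ) // p.1 ≠ 0 ∧ p.2 ≠ 0 ∧ p.1 + p.2 = k} => p.1.1) := by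
      intro p p' h
      dsimp only at h
      apply Subtype.ext
      apply Prod.ext h
      have e1 : (p : (ℤ × ℤ) × (ℤ × ℤ)).2 = k - (p : (ℤ × ℤ) × (ℤ × ℤ)).1 :=
        eq_sub_of_add_eq' p.2.2.2
      have e2 : (p' : (ℤ × ℤ) × (ℤ × ℤ)).2 = k - (p' : (ℤ × ℤ) × (ℤ × ℤ)).1 :=
        eq_sub_of_add_eq' p'.2.2.2
      rw [e1, e2, h]
    exact ENNReal.tsum_comp_le_tsum_of_injective hinj F
  set G : ℤ × ℤ → ℝ≥0∞ := fun x => if x = 0 then 0 else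
    ENNReal.ofReal (if LatLog.q x ≤ LatLog.q k then 4/(LatLog.q k * LatLog.q x)
      else 1/(LatLog.q x)^2) with hG
  have hq0 : LatLog.q (0 : ℤ × ℤ) = 0 := by
    show ((0:ℤ):ℝ)^2 + ((0:ℤ):ℝ)^2 = 0
    norm_num
  have hFG : ∀ x : ℤ × ℤ, F x ≤ G x + G (k - x) := by
    intro x
    by_cases hx0 : x = 0
    · subst hx0
      rw [hF]; dsimp only
      rw [hq0, zero_mul, div_zero, ENNReal.ofReal_zero]
      exact zero_le
    by_cases hxk : k - x = 0
    · rw [hF]; dsimp only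
      rw [hxk, hq0, mul_zero, div_zero, ENNReal.ofReal_zero]
      exact zero_le
    · have hmn : x + (k - x) = k := by abel
      have hreal := LatLog.pointwise (k := k) hx0 hxk hmn
      rw [hF, hG]; dsimp only
      rw [if_neg hx0, if_neg hxk]
      calc ENNReal.ofReal (1 / (LatLog.q x * LatLog.q (k - x)))
          ≤ ENNReal.ofReal ((if LatLog.q x ≤ LatLog.q k then 4/(LatLog.q k * LatLog.q x)
              else 1/(LatLog.q x)^2)
            + (if LatLog.q (k - x) ≤ LatLog.q k then 4/(LatLog.q k * LatLog.q (k - x))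
              else 1/(LatLog.q (k - x))^2)) := ENNReal.ofReal_le_ofReal hreal
      _ ≤ _ := ENNReal.ofReal_add_le
  have hrefl : ∑' x : ℤ × ℤ, G (k - x) = ∑' x : ℤ × ℤ, G x := by
    have := (Equiv.subLeft k).tsum_eq G
    simpa using this
  set G1 : ℤ × ℤ → ℝ≥0∞ := fun x => if x ≠ 0 ∧ LatLog.q x ≤ LatLog.q k
      then ENNReal.ofReal (4/(LatLog.q k * LatLog.q x)) else 0 with hG1def
  set G2 : ℤ × ℤ → ℝ≥0∞ := fun x => if LatLog.q k < LatLog.q x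
      then ENNReal.ofReal (1/(LatLog.q x)^2) else 0 with hG2def
  have hGsplit : ∀ x : ℤ × ℤ, G x ≤ G1 x + G2 x := by
    intro x
    rw [hG, hG1def, hG2def]; dsimp only
    by_cases hx0 : x = 0
    · rw [if_pos hx0]
      exact zero_le
    rw [if_neg hx0]
    by_cases hc : LatLog.q x ≤ LatLog.q k
    · rw [if_pos hc, if_pos ⟨hx0, hc⟩]
      exact le_add_right le_rfl
    · rw [if_neg hc, if_pos (not_le.mp hc)]
      exact le_add_left le_rfl
  have hG1sum : ∑' x : ℤ × ℤ, G1 x ≤ ENNReal.ofReal (4 / LatLog.q k)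
      * ENNReal.ofReal (14 + 10 * L) := by
    have hfac : ∀ x : ℤ × ℤ, G1 x = ENNReal.ofReal (4 / LatLog.q k)
        * (if x ≠ 0 ∧ LatLog.q x ≤ LatLog.q k then ENNReal.ofReal (1/LatLog.q x) else 0) := by
      intro x
      rw [hG1def]; dsimp only
      split_ifs with hc
      · rw [← ENNReal.ofReal_mul (by positivity)]
        congr 1
        rw [div_mul_div_comm, mul_one]
      · rw [mul_zero]
    calc ∑' x : ℤ × ℤ, G1 x
        = ENNReal.ofReal (4 / LatLog.q k) * ∑' x : ℤ × ℤ,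
            (if x ≠ 0 ∧ LatLog.q x ≤ LatLog.q k then ENNReal.ofReal (1/LatLog.q x) else 0) := by
          rw [← ENNReal.tsum_mul_left]
          exact tsum_congr hfac
    _ ≤ _ := by
          gcongr
          exact LatLog.lemNear hk
  have hGsum : ∑' x : ℤ × ℤ, G x ≤ ENNReal.ofReal ((216 + 40 * L) / LatLog.q k) := by
    calc ∑' x : ℤ × ℤ, G x ≤ ∑' x : ℤ × ℤ, (G1 x + G2 x) := ENNReal.tsum_le_tsum hGsplit
    _ = ∑' x, G1 x + ∑' x, G2 x := ENNReal.tsum_add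
    _ ≤ ENNReal.ofReal (4 / LatLog.q k) * ENNReal.ofReal (14 + 10 * L)
        + ENNReal.ofReal (160 / LatLog.q k) := add_le_add hG1sum (LatLog.lemTail hk)
    _ ≤ ENNReal.ofReal ((216 + 40 * L) / LatLog.q k) := by
        rw [← ENNReal.ofReal_mul (by positivity)]
        rw [← ENNReal.ofReal_add (by positivity) (by positivity)]
        apply ENNReal.ofReal_le_ofReal
        rw [div_mul_eq_mul_div, ← add_div, div_le_div_iff₀ hQ0 hQ0]
        nlinarith
  have hrpow : latNorm k ^ (-2:ℝ) = (LatLog.q k)⁻¹ := by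
    rw [Real.rpow_neg (by linarith : (0:ℝ) ≤ latNorm k),
      show ((2:ℝ)) = ((2:ℕ):ℝ) by norm_num, Real.rpow_natCast]
    rw [LatLog.latNorm_sq]
  calc (∑' p : {p : (ℤ × ℤ) × (ℤ × ℤ) // p.1 ≠ 0 ∧ p.2 ≠ 0 ∧ p.1 + p.2 = k},
        ENNReal.ofReal (1 / (latNorm p.1.1 ^ 2 * latNorm p.1.2 ^ 2)))
      ≤ ∑' x : ℤ × ℤ, F x := hsub
  _ ≤ ∑' x : ℤ × ℤ, (G x + G (k - x)) := ENNReal.tsum_le_tsum hFG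
  _ = ∑' x : ℤ × ℤ, G x + ∑' x : ℤ × ℤ, G (k - x) := ENNReal.tsum_add
  _ = ∑' x : ℤ × ℤ, G x + ∑' x : ℤ × ℤ, G x := by rw [hrefl]
  _ ≤ ENNReal.ofReal ((216 + 40 * L) / LatLog.q k)
      + ENNReal.ofReal ((216 + 40 * L) / LatLog.q k) := add_le_add hGsum hGsum
  _ ≤ ENNReal.ofReal (1000 * latNorm k ^ (-2:ℝ) * L) := by
      rw [← ENNReal.ofReal_add (by positivity) (by positivity)]
      apply ENNReal.ofReal_le_ofReal
      rw [hrpow]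
      rw [← add_div]
      have hcore : (216 + 40 * L) + (216 + 40 * L) ≤ 1000 * L := by nlinarith
      calc ((216 + 40 * L) + (216 + 40 * L)) / LatLog.q k ≤ (1000 * L) / LatLog.q k := by
            rw [div_le_div_iff₀ hQ0 hQ0]
            nlinarith
      _ = 1000 * (LatLog.q k)⁻¹ * L := by rw [div_eq_mul_inv]; ring
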